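/- Let Y, Ỹ ∈ ℝ^{n×k} have orthonormal columns, and set E = YYᵀ − ỸỸᵀ with ‖E‖_F ≤ ε for some ε ≥ 0. Let X̃, X_opt ∈ ℝ^{n×k} have orthonormal columns, let γ ≥ 1, and suppose ‖Ỹ − X̃X̃ᵀỸ‖_F² ≤ γ · ‖Ỹ − X_opt X_optᵀ Ỹ‖_F². Writing F_opt = ‖Y − X_opt X_optᵀ Y‖_F², it holds that ‖Y − X̃X̃ᵀY‖_F² ≤ γ · (F_opt + 4ε√F_opt + 4ε²). -/

import Mathlib

open Matrix

/-- Squared Frobenius norm of a real matrix: `‖A‖_F² = Σ_{i,j} A_{ij}²`. -/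
noncomputable def frobSq {m n : ℕ} (A : Matrix (Fin m) (Fin n) ℝ) : ℝ :=
  ∑ i, ∑ j, (A i j) ^ 2

/-- Frobenius norm of a real matrix. -/
noncomputable def frobNorm {m n : ℕ} (A : Matrix (Fin m) (Fin n) ℝ) : ℝ :=
  Real.sqrt (frobSq A)

lemma frobSq_nonneg' {m n : ℕ} (A : Matrix (Fin m) (Fin n) ℝ) : 0 ≤ frobSq A := by
  unfold frobSq; positivity

lemma frobNorm_nonneg' {m n : ℕ} (A : Matrix (Fin m) (Fin n) ℝ) : 0 ≤ frobNorm A :=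
  Real.sqrt_nonneg _

lemma sq_frobNorm' {m n : ℕ} (A : Matrix (Fin m) (Fin n) ℝ) : frobNorm A ^ 2 = frobSq A :=
  Real.sq_sqrt (frobSq_nonneg' A)

lemma frobSq_eq_trace' {m n : ℕ} (A : Matrix (Fin m) (Fin n) ℝ) :
    frobSq A = (Aᵀ * A).trace := by
  simp [frobSq, Matrix.trace, Matrix.mul_apply, Matrix.diag, sq]
  exact Finset.sum_comm

lemma frobNorm_add_le' {m n : ℕ} (A B : Matrix (Fin m) (Fin n) ℝ) :
    frobNorm (A + B) ≤ frobNorm A + frobNorm B := by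
  have key : ∀ C : Matrix (Fin m) (Fin n) ℝ,
      frobNorm C = ‖(WithLp.equiv 2 ((Fin m × Fin n) → ℝ)).symm (fun p => C p.1 p.2)‖ := by
    intro C
    rw [EuclideanSpace.norm_eq, frobNorm, frobSq]
    congr 1
    rw [Fintype.sum_prod_type]
    simp [sq_abs]
  rw [key, key, key]
  have : (WithLp.equiv 2 ((Fin m × Fin n) → ℝ)).symm (fun p => (A + B) p.1 p.2)
      = (WithLp.equiv 2 ((Fin m × Fin n) → ℝ)).symm (fun p => A p.1 p.2)
        + (WithLp.equiv 2 ((Fin m × Fin n) → ℝ)).symm (fun p => B p.1 p.2) := rfl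
  rw [this]
  exact norm_add_le _ _

lemma pyth' {n m : ℕ} (M : Matrix (Fin n) (Fin n) ℝ) (hM : Mᵀ = M) (hMM : M * M = M)
    (E : Matrix (Fin n) (Fin m) ℝ) :
    frobSq E = frobSq (M * E) + frobSq (E - M * E) := by
  have hMME : M * (M * E) = M * E := by rw [← Matrix.mul_assoc, hMM]
  rw [frobSq_eq_trace', frobSq_eq_trace', frobSq_eq_trace']
  have h1 : (M * E)ᵀ * (M * E) = Eᵀ * (M * E) := by
    rw [transpose_mul, hM, Matrix.mul_assoc, hMME]
  have h2 : (E - M * E)ᵀ * (E - M * E) = Eᵀ * E - Eᵀ * (M * E) := by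
    rw [transpose_sub, Matrix.sub_mul, Matrix.mul_sub, Matrix.mul_sub, h1, transpose_mul, hM,
      Matrix.mul_assoc]
    abel
  rw [h1, h2, trace_sub]
  ring

lemma frobSq_proj_le' {n m : ℕ} (M : Matrix (Fin n) (Fin n) ℝ) (hM : Mᵀ = M) (hMM : M * M = M)
    (E : Matrix (Fin n) (Fin m) ℝ) : frobSq (M * E) ≤ frobSq E := by
  have := pyth' M hM hMM E
  have := frobSq_nonneg' (E - M * E)
  linarith

lemma frobSq_proj_swap' {n k : ℕ} (M : Matrix (Fin n) (Fin n) ℝ)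
    (Z : Matrix (Fin n) (Fin k) ℝ) (hZ : Zᵀ * Z = 1) :
    frobSq (M * (Z * Zᵀ)) = frobSq (M * Z) := by
  rw [frobSq_eq_trace', frobSq_eq_trace']
  have h1 : (M * (Z * Zᵀ))ᵀ * (M * (Z * Zᵀ)) = Z * (Zᵀ * Mᵀ * (M * Z) * Zᵀ) := by
    simp [transpose_mul, Matrix.mul_assoc]
  rw [h1, Matrix.trace_mul_comm]
  have h2 : Zᵀ * Mᵀ * (M * Z) * Zᵀ * Z = (M * Z)ᵀ * (M * Z) := by
    rw [Matrix.mul_assoc, hZ, Matrix.mul_one, transpose_mul]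
  rw [h2]

/-- For `X` with orthonormal columns, `1 - X Xᵀ` is a symmetric idempotent. -/
lemma proj_props' {n k : ℕ} (X : Matrix (Fin n) (Fin k) ℝ) (hX : Xᵀ * X = 1) :
    ((1 : Matrix (Fin n) (Fin n) ℝ) - X * Xᵀ)ᵀ = 1 - X * Xᵀ ∧
    ((1 : Matrix (Fin n) (Fin n) ℝ) - X * Xᵀ) * (1 - X * Xᵀ) = 1 - X * Xᵀ := by
  constructor
  · rw [transpose_sub, transpose_one, transpose_mul, transpose_transpose]
  · have h : (X * Xᵀ) * (X * Xᵀ) = X * Xᵀ := by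
      rw [Matrix.mul_assoc, ← Matrix.mul_assoc Xᵀ X Xᵀ, hX, Matrix.one_mul]
    rw [Matrix.sub_mul, Matrix.one_mul, Matrix.mul_sub, Matrix.mul_one, h]
    abel

/-- Key comparison: `‖(1-P)Y‖_F ≤ ‖(1-P)Ỹ‖_F + ‖YYᵀ - ỸỸᵀ‖_F` for a
projection `1 - XXᵀ`. -/
lemma norm_compare' {n k : ℕ} (X Y Yt : Matrix (Fin n) (Fin k) ℝ)
    (hX : Xᵀ * X = 1) (hY : Yᵀ * Y = 1) (hYt : Ytᵀ * Yt = 1) :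
    frobNorm (Y - X * Xᵀ * Y) ≤ frobNorm (Yt - X * Xᵀ * Yt)
      + frobNorm (Y * Yᵀ - Yt * Ytᵀ) := by
  obtain ⟨hM, hMM⟩ := proj_props' X hX
  set M : Matrix (Fin n) (Fin n) ℝ := 1 - X * Xᵀ with hMdef
  have hY' : Y - X * Xᵀ * Y = M * Y := by
    rw [hMdef, Matrix.sub_mul, Matrix.one_mul]
  have hYt' : Yt - X * Xᵀ * Yt = M * Yt := by
    rw [hMdef, Matrix.sub_mul, Matrix.one_mul]
  rw [hY', hYt']
  have e1 : frobNorm (M * Y) = frobNorm (M * (Y * Yᵀ)) := by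
    unfold frobNorm; rw [frobSq_proj_swap' M Y hY]
  have e2 : frobNorm (M * Yt) = frobNorm (M * (Yt * Ytᵀ)) := by
    unfold frobNorm; rw [frobSq_proj_swap' M Yt hYt]
  rw [e1, e2]
  have split : M * (Y * Yᵀ) = M * (Yt * Ytᵀ) + M * (Y * Yᵀ - Yt * Ytᵀ) := by
    rw [← Matrix.mul_add]
    congr 1
    abel
  calc frobNorm (M * (Y * Yᵀ))
      ≤ frobNorm (M * (Yt * Ytᵀ)) + frobNorm (M * (Y * Yᵀ - Yt * Ytᵀ)) := by
        rw [split]; exact frobNorm_add_le' _ _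
    _ ≤ frobNorm (M * (Yt * Ytᵀ)) + frobNorm (Y * Yᵀ - Yt * Ytᵀ) := by
        have := frobSq_proj_le' M hM hMM (Y * Yᵀ - Yt * Ytᵀ)
        exact add_le_add le_rfl (Real.sqrt_le_sqrt this)

/-- If `Y, Ỹ` have orthonormal columns with `‖YYᵀ − ỸỸᵀ‖_F ≤ ε`, and the
indicator matrix `X̃` is a `γ`-approximate `k`-means solution on `Ỹ`, then with
`F_opt = ‖Y − X_opt X_optᵀ Y‖_F²` we have
`‖Y − X̃X̃ᵀY‖_F² ≤ γ·(F_opt + 4ε√F_opt + 4ε²)`. -/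
theorem approx_clustering_frobSq_bound (n k : ℕ)
    (Y Yt Xt Xopt : Matrix (Fin n) (Fin k) ℝ)
    (hY : Yᵀ * Y = 1) (hYt : Ytᵀ * Yt = 1)
    (hXt : Xtᵀ * Xt = 1) (hXopt : Xoptᵀ * Xopt = 1)
    (ε : ℝ) (hε : 0 ≤ ε)
    (hE : frobNorm (Y * Yᵀ - Yt * Ytᵀ) ≤ ε)
    (γ : ℝ) (hγ : 1 ≤ γ)
    (happrox : frobSq (Yt - Xt * Xtᵀ * Yt) ≤ γ * frobSq (Yt - Xopt * Xoptᵀ * Yt)) :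
    frobSq (Y - Xt * Xtᵀ * Y) ≤
      γ * (frobSq (Y - Xopt * Xoptᵀ * Y)
        + 4 * ε * Real.sqrt (frobSq (Y - Xopt * Xoptᵀ * Y)) + 4 * ε ^ 2) := by
  set a := frobNorm (Y - Xt * Xtᵀ * Y) with ha
  set at' := frobNorm (Yt - Xt * Xtᵀ * Yt) with hat
  set b := frobNorm (Y - Xopt * Xoptᵀ * Y) with hb
  set bt := frobNorm (Yt - Xopt * Xoptᵀ * Yt) with hbt
  have hE' : frobNorm (Yt * Ytᵀ - Y * Yᵀ) ≤ ε := by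
    have hneg : frobSq (Yt * Ytᵀ - Y * Yᵀ) = frobSq (Y * Yᵀ - Yt * Ytᵀ) := by
      unfold frobSq
      simp only [Matrix.sub_apply]
      congr 1; funext i; congr 1; funext j; ring
    unfold frobNorm
    rw [hneg]
    exact hE
  -- a ≤ at' + ε
  have h1 : a ≤ at' + ε := by
    have := norm_compare' Xt Y Yt hXt hY hYt
    rw [← ha, ← hat] at this
    linarith
  -- bt ≤ b + ε
  have h2 : bt ≤ b + ε := by
    have := norm_compare' Xopt Yt Y hXopt hYt hY
    rw [← hbt, ← hb] at this
    linarith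
  -- at' ≤ √γ * bt
  have hγ0 : (0:ℝ) ≤ γ := by linarith
  set s := Real.sqrt γ with hs
  have hs1 : 1 ≤ s := by
    rw [hs]; exact Real.one_le_sqrt.mpr hγ
  have hssq : s ^ 2 = γ := Real.sq_sqrt hγ0
  have h3 : at' ≤ s * bt := by
    have h4 : at' ^ 2 ≤ (s * bt) ^ 2 := by
      rw [mul_pow, hssq, sq_frobNorm', sq_frobNorm']
      exact happrox
    have hbn : 0 ≤ s * bt := mul_nonneg (by linarith) (frobNorm_nonneg' _)
    nlinarith [frobNorm_nonneg' (Yt - Xt * Xtᵀ * Yt)]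
  -- chain: a ≤ s * (b + 2ε)
  have h5 : a ≤ s * (b + 2 * ε) := by
    have hbt0 : 0 ≤ bt := frobNorm_nonneg' _
    nlinarith
  -- square
  have ha0 : 0 ≤ a := frobNorm_nonneg' _
  have hb0 : 0 ≤ b := frobNorm_nonneg' _
  have h6 : a ^ 2 ≤ γ * (b + 2 * ε) ^ 2 := by
    nlinarith [mul_nonneg (mul_nonneg (by linarith : (0:ℝ) ≤ s) hb0) hε]
  have hrw : Real.sqrt (frobSq (Y - Xopt * Xoptᵀ * Y)) = b := rfl
  rw [← sq_frobNorm' (Y - Xt * Xtᵀ * Y), hrw, ← sq_frobNorm' (Y - Xopt * Xoptᵀ * Y)]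
  rw [← ha, ← hb]
  nlinarith
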